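/- Let k be an algebraic closure of F_q (q a power of p), let M be a finitely generated W_n(k)-module, and let Φ : M → M be a σ-linear endomorphism, where σ is the Witt-vector Frobenius on W_n(k). Then the map 1 − Φ : M → M is surjective. -/

import Mathlib

/-- An algebraic closure of the finite field `𝔽_q` with `q = p ^ d` elements. -/
abbrev FqBar (p d : ℕ) [Fact p.Prime] : Type :=
  AlgebraicClosure (GaloisField p d)

/-- The Frobenius `σ` of the truncated Witt vectors `W_n(R)` of a ring `R` of characteristic
`p`, induced by the `p`-th power map on `R`: it acts coefficientwise by `x ↦ x ^ p`. -/
noncomputable def truncatedWittFrobenius (p n : ℕ) [Fact p.Prime] (R : Type*) [CommRing R] :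
    TruncatedWittVector p n R → TruncatedWittVector p n R :=
  fun x => TruncatedWittVector.mk p fun i => x.coeff i ^ p

namespace StmtTwo

open Polynomial Finset

lemma semilinear_one_sub_surj {K V : Type*} [Field K] [IsAlgClosed K]
    [AddCommGroup V] [Module K V] [FiniteDimensional K V]
    (q : ℕ) (hq : 1 < q) (φ : V →+ V)
    (hφ : ∀ (c : K) (x : V), φ (c • x) = c ^ q • φ x)
    (v : V) : ∃ x : V, x - φ x = v := by
  classical
  by_cases hv : v = 0
  · exact ⟨0, by simp [hv]⟩
  -- the iterates of v under φ
  set w : ℕ → V := fun i => φ^[i] v with hw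
  have hwsucc : ∀ i, w (i + 1) = φ (w i) := fun i => Function.iterate_succ_apply' φ i v
  set N := Module.finrank K V with hN
  -- find a nontrivial dependence among w 0, ..., w N
  have hdep : ¬ LinearIndependent K (fun i : Fin (N + 1) => w i) := by
    intro h
    have := h.fintype_card_le_finrank
    rw [Fintype.card_fin] at this
    omega
  obtain ⟨a, hsum, i₀, hi₀⟩ := Fintype.not_linearIndependent_iff.mp hdep
  set b : ℕ → K := fun i => if h : i < N + 1 then a ⟨i, h⟩ else 0 with hb
  have hbsum : ∑ i ∈ range (N + 1), b i • w i = 0 := by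
    rw [← Fin.sum_univ_eq_sum_range (fun i => b i • w i) (N + 1), ← hsum]
    apply Finset.sum_congr rfl
    intro i _
    simp [hb, i.isLt]
    intro h; have := i.isLt; omega
  -- the largest index with nonzero coefficient
  set m := Nat.findGreatest (fun i => b i ≠ 0) N with hm
  have hbm : b m ≠ 0 := by
    have hle : (i₀ : ℕ) ≤ N := by omega
    exact Nat.findGreatest_spec (P := fun i => b i ≠ 0) hle (show b (i₀:ℕ) ≠ 0 by simp [hb, i₀.isLt, hi₀, hle])
  have hmN : m ≤ N := Nat.findGreatest_le N
  have hbgt : ∀ i, m < i → b i = 0 := by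
    intro i hi
    by_cases h : i ≤ N
    · by_contra hne
      exact Nat.findGreatest_is_greatest hi h hne
    · have : ¬ (i < N + 1) := by omega
      simp [hb, this, h]
  -- m ≥ 1 since v ≠ 0
  have hm0 : m ≠ 0 := by
    intro h0
    apply hv
    have hone : ∑ i ∈ range (N + 1), b i • w i = b 0 • w 0 := by
      rw [Finset.sum_eq_single 0]
      · intro i _ hne
        rw [hbgt i (by omega), zero_smul]
      · simp
    rw [hone] at hbsum
    have hb0 : b 0 ≠ 0 := h0 ▸ hbm
    have : w 0 = 0 := by
      rcases smul_eq_zero.mp hbsum with h | h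
      · exact absurd h hb0
      · exact h
    simpa [hw] using this
  obtain ⟨M, hM⟩ := Nat.exists_eq_succ_of_ne_zero hm0
  -- the dependence relation : w m = sum_{i<m} c i • w i
  set c : ℕ → K := fun i => (b m)⁻¹ * (- b i) with hc
  have hrel : w m = ∑ i ∈ range m, c i • w i := by
    have h1 : ∑ i ∈ range (m + 1), b i • w i = 0 := by
      have hsplit := Finset.sum_range_add_sum_Ico (fun i => b i • w i)
        (by omega : m + 1 ≤ N + 1)
      have hz : ∑ i ∈ Finset.Ico (m + 1) (N + 1), b i • w i = 0 :=
        Finset.sum_eq_zero fun i hi => by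
          rw [hbgt i (by have := (Finset.mem_Ico.mp hi).1; omega), zero_smul]
      rw [hz, hbsum, add_zero] at hsplit
      exact hsplit
    rw [Finset.sum_range_succ] at h1
    have h2 : w m = (b m)⁻¹ • (- ∑ i ∈ range m, b i • w i) := by
      rw [← eq_neg_of_add_eq_zero_right h1, inv_smul_smul₀ hbm]
    have h3 : ∑ i ∈ range m, c i • w i = (b m)⁻¹ • (- ∑ i ∈ range m, b i • w i) := by
      simp only [hc, mul_smul, neg_smul, ← Finset.smul_sum, ← Finset.sum_neg_distrib]
    rw [h2, h3]
  -- the auxiliary polynomials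
  set T : ℕ → Polynomial K := fun i => Nat.rec (Polynomial.C (c 0) * Polynomial.X ^ q + 1)
    (fun i Ti => Ti ^ q + Polynomial.C (c (i + 1)) * Polynomial.X ^ q) i with hT
  have hT0 : T 0 = Polynomial.C (c 0) * Polynomial.X ^ q + 1 := rfl
  have hTsucc : ∀ i, T (i + 1) = T i ^ q + Polynomial.C (c (i + 1)) * Polynomial.X ^ q :=
    fun i => rfl
  have hcast : ∀ n e : ℕ, n • ((e : ℕ) : WithBot ℕ) = ((n * e : ℕ) : WithBot ℕ) := by
    intro n e
    induction n with
    | zero => simp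
    | succ n ih => rw [succ_nsmul, ih, Nat.succ_mul]; push_cast; ring
  have hdeg : ∀ i, (T i).degree ≤ 0 ∨ ∃ e : ℕ, 2 ≤ e ∧ (T i).degree = e := by
    intro i
    induction i with
    | zero =>
      by_cases hc0 : c 0 = 0
      · left; rw [hT0, hc0]; simp
      · right
        refine ⟨q, hq, ?_⟩
        rw [hT0, Polynomial.degree_add_eq_left_of_degree_lt, Polynomial.degree_C_mul_X_pow _ hc0]
        rw [Polynomial.degree_C_mul_X_pow _ hc0, Polynomial.degree_one]
        exact_mod_cast (by omega : (0:ℕ) < q)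
    | succ i ih =>
      rcases ih with hle | ⟨e, he2, hde⟩
      · have ha := Polynomial.eq_C_of_degree_le_zero hle
        by_cases hc' : c (i + 1) = 0
        · left
          rw [hTsucc, hc', map_zero, zero_mul, add_zero, ha, ← Polynomial.C_pow]
          exact Polynomial.degree_C_le
        · right
          refine ⟨q, hq, ?_⟩
          rw [hTsucc, ha, ← Polynomial.C_pow, Polynomial.degree_add_eq_right_of_degree_lt,
            Polynomial.degree_C_mul_X_pow _ hc']
          rw [Polynomial.degree_C_mul_X_pow _ hc']
          exact lt_of_le_of_lt Polynomial.degree_C_le (by exact_mod_cast (by omega : (0:ℕ) < q))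
      · right
        refine ⟨q * e, by nlinarith, ?_⟩
        have hdp : (T i ^ q).degree = ((q * e : ℕ) : WithBot ℕ) := by
          rw [Polynomial.degree_pow, hde, hcast]
        rw [hTsucc, Polynomial.degree_add_eq_left_of_degree_lt, hdp]
        rw [hdp]
        refine lt_of_le_of_lt (Polynomial.degree_C_mul_X_pow_le q (c (i+1))) ?_
        exact_mod_cast (by nlinarith : q < q * e)
  -- choose a root s of X - T M
  have hnz : (Polynomial.X - T M).degree ≠ 0 := by
    rcases hdeg M with hle | ⟨e, he2, hde⟩
    · rw [sub_eq_add_neg, Polynomial.degree_add_eq_left_of_degree_lt, Polynomial.degree_X]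
      · exact one_ne_zero
      · rw [Polynomial.degree_X, Polynomial.degree_neg]
        exact lt_of_le_of_lt hle (by norm_num)
    · rw [Polynomial.degree_sub_eq_right_of_degree_lt]
      · rw [hde]; exact_mod_cast (by omega : e ≠ 0)
      · rw [Polynomial.degree_X, hde]
        exact_mod_cast (by omega : 1 < e)
  obtain ⟨s, hs⟩ := IsAlgClosed.exists_root _ hnz
  have hTs : (T M).eval s = s := by
    have h' := hs
    simp only [Polynomial.IsRoot, Polynomial.eval_sub, Polynomial.eval_X] at h'
    exact (sub_eq_zero.mp h').symm
  set t : ℕ → K := fun i => (T i).eval s with ht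
  have ht0 : t 0 = c 0 * s ^ q + 1 := by simp [ht, hT0]
  have htsucc : ∀ i, t (i + 1) = t i ^ q + c (i + 1) * s ^ q := fun i => by
    simp [ht, hTsucc i]
  have htM : t M = s := hTs
  have hw0 : w 0 = v := by simp [hw]
  -- the solution
  refine ⟨∑ i ∈ range m, t i • w i, ?_⟩
  have hφx : φ (∑ i ∈ range m, t i • w i) = ∑ i ∈ range m, (t i ^ q) • w (i + 1) := by
    rw [map_sum]
    exact Finset.sum_congr rfl fun i _ => by rw [hφ, ← hwsucc]
  show (∑ i ∈ range m, t i • w i) - φ (∑ i ∈ range m, t i • w i) = v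
  rw [hφx]
  have hA : ∑ i ∈ range m, t i • w i
      = (∑ i ∈ range M, t (i + 1) • w (i + 1)) + t 0 • w 0 := by
    rw [hM]; exact Finset.sum_range_succ' _ M
  have hB : ∑ i ∈ range m, (t i ^ q) • w (i + 1)
      = (∑ i ∈ range M, (t i ^ q) • w (i + 1)) + (t M ^ q) • w m := by
    rw [hM]; exact Finset.sum_range_succ _ M
  have hwm : w m = (∑ i ∈ range M, c (i + 1) • w (i + 1)) + c 0 • w 0 := by
    rw [hrel, hM]; exact Finset.sum_range_succ' _ M
  rw [hA, hB, hwm, htM]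
  have hsmul : s ^ q • ((∑ i ∈ range M, c (i + 1) • w (i + 1)) + c 0 • w 0)
      = (∑ i ∈ range M, (s ^ q * c (i + 1)) • w (i + 1)) + (s ^ q * c 0) • w 0 := by
    rw [smul_add, Finset.smul_sum]
    simp [smul_smul]
  rw [hsmul]
  have hS : ∑ i ∈ range M, t (i + 1) • w (i + 1)
      = (∑ i ∈ range M, (t i ^ q) • w (i + 1))
        + ∑ i ∈ range M, (s ^ q * c (i + 1)) • w (i + 1) := by
    rw [← Finset.sum_add_distrib]
    exact Finset.sum_congr rfl fun i _ => by
      rw [htsucc i, add_smul, mul_comm (c (i + 1)) (s ^ q)]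
  rw [hS]
  have habel : ∀ A B x z : V, ((A + B) + x) - (A + (B + z)) = x - z := by
    intros; abel
  rw [habel]
  rw [ht0, ← sub_smul]
  have hone : c 0 * s ^ q + 1 - s ^ q * c 0 = 1 := by ring
  rw [hone, one_smul, hw0]



open WittVector Finset

variable {p : ℕ} [hp : Fact p.Prime] {k : Type*} [CommRing k] [CharP k p]

lemma frob_truncate (n : ℕ) (z : WittVector p k) :
    truncatedWittFrobenius p n k (WittVector.truncate n z)
      = WittVector.truncate n (WittVector.frobenius z) := by
  show TruncatedWittVector.mk p _ = _
  ext i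
  rw [TruncatedWittVector.coeff_mk, WittVector.coeff_truncate, WittVector.coeff_truncate,
    WittVector.coeff_frobenius_charP]

lemma frob_p_pow (n j : ℕ) :
    truncatedWittFrobenius p n k ((p : TruncatedWittVector p n k) ^ j)
      = (p : TruncatedWittVector p n k) ^ j := by
  have h : ((p : TruncatedWittVector p n k) ^ j)
      = WittVector.truncate n ((p : WittVector p k) ^ j) := by
    rw [map_pow, map_natCast]
  rw [h, frob_truncate, map_pow, map_natCast]

lemma mul_p_pow_coeff (j : ℕ) (y : WittVector p k) :
    ∀ i < j, (y * (p : WittVector p k) ^ j).coeff i = 0 := by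
  induction j generalizing y with
  | zero => intro i hi; omega
  | succ j ih =>
    intro i hi
    have h : y * (p : WittVector p k) ^ (j + 1) = y * (p : WittVector p k) ^ j * p := by ring
    rw [h]
    match i with
    | 0 => exact mul_charP_coeff_zero _
    | (i + 1) =>
      rw [mul_charP_coeff_succ, ih y i (by omega), zero_pow hp.out.ne_zero]

lemma p_pow_n_zero (n : ℕ) : ((p : TruncatedWittVector p n k)) ^ n = 0 := by
  have h : ((p : TruncatedWittVector p n k) ^ n)
      = WittVector.truncate n ((p : WittVector p k) ^ n) := by rw [map_pow, map_natCast]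
  rw [h]
  ext i
  rw [WittVector.coeff_truncate]
  have := mul_p_pow_coeff (p := p) (k := k) n 1 i i.isLt
  rw [one_mul] at this
  rw [this]
  exact (TruncatedWittVector.coeff_zero p n k i).symm

variable [PerfectRing k p]

lemma eq_p_mul_of_coeff_zero {n : ℕ} (hn : 0 < n) (y : TruncatedWittVector p n k)
    (h : y.coeff ⟨0, hn⟩ = 0) : ∃ z, y = p * z := by
  obtain ⟨x, rfl⟩ := WittVector.truncate_surjective p n k y
  have hx0 : x.coeff 0 = 0 := by rwa [WittVector.coeff_truncate] at h
  set x' : WittVector p k := WittVector.mk p (fun i => x.coeff (i + 1)) with hx'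
  have hV : verschiebung x' = x := by
    ext i
    match i with
    | 0 => rw [verschiebung_coeff_zero, hx0]
    | (i + 1) => rw [verschiebung_coeff_succ, hx', WittVector.coeff_mk]
  obtain ⟨x'', hx''⟩ := (frobenius_bijective p k).surjective x'
  refine ⟨WittVector.truncate n x'', ?_⟩
  have : x = x'' * p := by rw [← hV, ← hx'', verschiebung_frobenius]
  rw [this, map_mul, map_natCast, mul_comm]

/-- coefficient `0` as a ring hom, for positive length -/
noncomputable def c0 {n : ℕ} (hn : 0 < n) : TruncatedWittVector p n k →+* k where
  toFun y := y.coeff ⟨0, hn⟩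
  map_one' := by
    show TruncatedWittVector.coeff ⟨0, hn⟩ (1 : TruncatedWittVector p n k) = 1
    rw [← map_one (WittVector.truncate (p := p) (R := k) n), WittVector.coeff_truncate,
      WittVector.one_coeff_zero]
  map_mul' := by
    intro a b
    show TruncatedWittVector.coeff ⟨0, hn⟩ (a * b)
      = TruncatedWittVector.coeff ⟨0, hn⟩ a * TruncatedWittVector.coeff ⟨0, hn⟩ b
    obtain ⟨x, rfl⟩ := WittVector.truncate_surjective p n k a
    obtain ⟨y, rfl⟩ := WittVector.truncate_surjective p n k b
    rw [← map_mul, WittVector.coeff_truncate, WittVector.coeff_truncate,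
      WittVector.coeff_truncate, WittVector.mul_coeff_zero]
  map_zero' := TruncatedWittVector.coeff_zero p n k _
  map_add' := by
    intro a b
    show TruncatedWittVector.coeff ⟨0, hn⟩ (a + b)
      = TruncatedWittVector.coeff ⟨0, hn⟩ a + TruncatedWittVector.coeff ⟨0, hn⟩ b
    obtain ⟨x, rfl⟩ := WittVector.truncate_surjective p n k a
    obtain ⟨y, rfl⟩ := WittVector.truncate_surjective p n k b
    rw [← map_add, WittVector.coeff_truncate, WittVector.coeff_truncate,
      WittVector.coeff_truncate, WittVector.add_coeff_zero]



lemma c0_frob {n : ℕ} (hn : 0 < n) (y : TruncatedWittVector p n k) :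
    c0 hn (truncatedWittFrobenius p n k y) = c0 hn y ^ p := by
  show TruncatedWittVector.coeff ⟨0, hn⟩ (TruncatedWittVector.mk p fun i => y.coeff i ^ p)
    = TruncatedWittVector.coeff ⟨0, hn⟩ y ^ p
  rw [TruncatedWittVector.coeff_mk]

section Star

variable {k : Type*} [Field k] [IsAlgClosed k] [CharP k p] [PerfectRing k p]
variable {n : ℕ} {M : Type*} [AddCommGroup M]
  [Module (TruncatedWittVector p n k) M] [Module.Finite (TruncatedWittVector p n k) M]

lemma star_step (hn : 0 < n) (Φ : M →+ M)
    (hΦ : ∀ (c : TruncatedWittVector p n k) (x : M),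
      Φ (c • x) = truncatedWittFrobenius p n k c • Φ x) (w : M) :
    ∃ u u' : M, w - (u - Φ u) = (p : TruncatedWittVector p n k) • u' := by
  classical
  set R := TruncatedWittVector p n k with hR
  set pM : Submodule R M := LinearMap.range ((p : R) • (LinearMap.id : M →ₗ[R] M)) with hpM
  have hmem : ∀ y : M, y ∈ pM ↔ ∃ z, (p : R) • z = y := by
    intro y
    constructor
    · rintro ⟨z, rfl⟩; exact ⟨z, rfl⟩
    · rintro ⟨z, rfl⟩; exact ⟨z, rfl⟩
  have hσp : truncatedWittFrobenius p n k (p : R) = (p : R) := by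
    have := frob_p_pow (p := p) (k := k) n 1
    simpa using this
  have hΦpM : ∀ x ∈ pM, Φ x ∈ pM := by
    intro x hx
    obtain ⟨z, rfl⟩ := (hmem x).mp hx
    exact (hmem _).mpr ⟨Φ z, by rw [hΦ, hσp]⟩
  set V := M ⧸ pM with hV
  set L : k → R := fun c => TruncatedWittVector.mk p (fun i => if (i : ℕ) = 0 then c else 0)
    with hL
  have hc0L : ∀ c : k, c0 hn (L c) = c := by
    intro c
    show TruncatedWittVector.coeff ⟨0, hn⟩
      (TruncatedWittVector.mk p fun i : Fin n => if ((i : ℕ) = 0) then c else 0) = c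
    rw [TruncatedWittVector.coeff_mk]
    simp
  have act_eq : ∀ r r' : R, c0 hn r = c0 hn r' → ∀ x : V, r • x = r' • x := by
    intro r r' h x
    obtain ⟨m', rfl⟩ := Submodule.Quotient.mk_surjective pM x
    rw [← Submodule.Quotient.mk_smul, ← Submodule.Quotient.mk_smul, Submodule.Quotient.eq]
    have hc : c0 hn (r - r') = 0 := by rw [map_sub, h, sub_self]
    obtain ⟨z, hz⟩ := eq_p_mul_of_coeff_zero hn (r - r') hc
    rw [← sub_smul, hz]
    exact (hmem _).mpr ⟨z • m', by rw [smul_smul]⟩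
  letI instSMul : SMul k V := ⟨fun c x => L c • x⟩
  have hsmul_def : ∀ (c : k) (x : V), c • x = L c • x := fun _ _ => rfl
  letI instMA : MulAction k V :=
    { one_smul := fun x => by
        rw [hsmul_def, act_eq (L 1) 1 (by rw [hc0L, map_one]), one_smul]
      mul_smul := fun c c' x => by
        rw [hsmul_def, hsmul_def, hsmul_def,
          act_eq (L (c * c')) (L c * L c') (by rw [hc0L, map_mul, hc0L, hc0L]), mul_smul] }
  letI instDMA : DistribMulAction k V :=
    { smul_zero := fun c => by rw [hsmul_def, smul_zero]
      smul_add := fun c x y => by rw [hsmul_def, hsmul_def, hsmul_def, smul_add] }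
  letI instMod : Module k V :=
    { add_smul := fun c c' x => by
        rw [hsmul_def, hsmul_def, hsmul_def,
          act_eq (L (c + c')) (L c + L c') (by rw [hc0L, map_add, hc0L, hc0L]), add_smul]
      zero_smul := fun x => by
        rw [hsmul_def, act_eq (L 0) 0 (by rw [hc0L, map_zero]), zero_smul] }
  haveI hfin : Module.Finite k V := by
    obtain ⟨S, hS⟩ := Module.Finite.fg_top (R := R) (M := M)
    constructor
    refine ⟨S.image (Submodule.Quotient.mk), ?_⟩
    rw [eq_top_iff]
    rintro x -
    obtain ⟨m', rfl⟩ := Submodule.Quotient.mk_surjective pM x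
    have hm' : m' ∈ Submodule.span R (S : Set M) := by rw [hS]; trivial
    refine Submodule.span_induction ?_ ?_ ?_ ?_ hm'
    · intro y hy
      exact Submodule.subset_span (by
        simp only [Finset.coe_image, Set.mem_image, Finset.mem_coe]
        exact ⟨y, hy, rfl⟩)
    · rw [Submodule.Quotient.mk_zero]; exact zero_mem _
    · intro a b _ _ ha hb
      rw [Submodule.Quotient.mk_add]; exact add_mem ha hb
    · intro r a _ ha
      rw [Submodule.Quotient.mk_smul, act_eq r (L (c0 hn r)) (by rw [hc0L]),
        ← hsmul_def]
      exact Submodule.smul_mem _ _ ha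
  set φf : V → V := fun x => Quotient.liftOn' x (fun m' => Submodule.Quotient.mk (Φ m'))
    (fun a b hab => by
      have h1 : a - b ∈ pM := (Submodule.quotientRel_def pM).mp hab
      have h2 : Φ a - Φ b ∈ pM := by rw [← map_sub]; exact hΦpM _ h1
      exact (Submodule.Quotient.eq pM).mpr h2) with hφf
  have hφmk : ∀ m' : M, φf (Submodule.Quotient.mk m') = Submodule.Quotient.mk (Φ m') :=
    fun _ => rfl
  set φ : V →+ V :=
    { toFun := φf
      map_zero' := by
        show φf 0 = 0
        rw [show (0 : V) = Submodule.Quotient.mk 0 from (Submodule.Quotient.mk_zero pM).symm,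
          hφmk, map_zero, Submodule.Quotient.mk_zero]
      map_add' := fun x y => by
        obtain ⟨a, rfl⟩ := Submodule.Quotient.mk_surjective pM x
        obtain ⟨b, rfl⟩ := Submodule.Quotient.mk_surjective pM y
        show φf (Submodule.Quotient.mk a + Submodule.Quotient.mk b)
          = φf (Submodule.Quotient.mk a) + φf (Submodule.Quotient.mk b)
        rw [← Submodule.Quotient.mk_add, hφmk, hφmk, hφmk, map_add,
          Submodule.Quotient.mk_add] } with hφ'
  have hφsemi : ∀ (c : k) (x : V), φ (c • x) = c ^ p • φ x := by
    intro c x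
    obtain ⟨m', rfl⟩ := Submodule.Quotient.mk_surjective pM x
    show φf (L c • Submodule.Quotient.mk m') = L (c ^ p) • φf (Submodule.Quotient.mk m')
    rw [← Submodule.Quotient.mk_smul, hφmk, hφmk, hΦ, Submodule.Quotient.mk_smul]
    exact act_eq _ _ (by rw [c0_frob, hc0L, hc0L]) _
  obtain ⟨xbar, hxbar⟩ := semilinear_one_sub_surj p hp.out.one_lt φ hφsemi
    (Submodule.Quotient.mk w)
  obtain ⟨u, rfl⟩ := Submodule.Quotient.mk_surjective pM xbar
  have hx2 : Submodule.Quotient.mk (u - Φ u) = (Submodule.Quotient.mk w : V) := by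
    rw [Submodule.Quotient.mk_sub]
    exact hxbar
  have hx3 : w - (u - Φ u) ∈ pM := by
    have := (Submodule.Quotient.eq pM).mp hx2.symm
    exact this
  obtain ⟨z, hz⟩ := (hmem _).mp hx3
  exact ⟨u, z, hz.symm⟩

end Star

end StmtTwo

open StmtTwo in
/-- Let `k` be an algebraic closure of `𝔽_q` (`q` a power of `p`), let `M` be a
finitely generated `W_n(k)`-module, and let `Φ : M → M` be a `σ`-linear endomorphism, where `σ`
is the Witt-vector Frobenius on `W_n(k)`.  Then the map `1 - Φ : M → M` is surjective. -/
theorem one_sub_sigma_linear_surjective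
    (p d n : ℕ) [Fact p.Prime] (hd : d ≠ 0)
    (M : Type*) [AddCommGroup M] [Module (TruncatedWittVector p n (FqBar p d)) M]
    [Module.Finite (TruncatedWittVector p n (FqBar p d)) M]
    (Φ : M →+ M)
    (hΦ : ∀ (c : TruncatedWittVector p n (FqBar p d)) (x : M),
      Φ (c • x) = truncatedWittFrobenius p n (FqBar p d) c • Φ x) :
    Function.Surjective (fun x : M => x - Φ x) := by
  set k := FqBar p d with hk
  set R := TruncatedWittVector p n k with hR
  intro v
  rcases Nat.eq_zero_or_pos n with hn | hn
  · subst hn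
    have hz : ∀ y : M, y = 0 := fun y => by
      have h10 : (1 : R) = 0 := by
        apply TruncatedWittVector.ext
        intro i
        exact i.elim0
      rw [← one_smul R y, h10, zero_smul]
    refine ⟨v, ?_⟩
    show v - Φ v = v
    rw [hz (Φ v), sub_zero]
  · have key : ∀ i : ℕ, ∀ j : ℕ, n ≤ j + i → ∀ w : M, ∃ x, x - Φ x = ((p : R) ^ j) • w := by
      intro i
      induction i with
      | zero =>
        intro j hj w
        have hpj : (p : R) ^ j = 0 := by
          have h1 : (p : R) ^ j = (p : R) ^ n * (p : R) ^ (j - n) := by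
            rw [← pow_add]
            congr 1
            omega
          rw [h1, p_pow_n_zero, zero_mul]
        exact ⟨0, by rw [hpj, zero_smul, map_zero, sub_zero]⟩
      | succ i ih =>
        intro j hj w
        by_cases hcase : n ≤ j + i
        · exact ih j hcase w
        · obtain ⟨u, u', hu⟩ := star_step hn Φ hΦ w
          obtain ⟨y, hy⟩ := ih (j + 1) (by omega) u'
          refine ⟨(p : R) ^ j • u + y, ?_⟩
          have huu : u - Φ u = w - (p : R) • u' := by
            have := hu
            abel_nf at this ⊢
            linear_combination (norm := abel_nf) -this
          rw [map_add, hΦ, frob_p_pow]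
          calc (p : R) ^ j • u + y - ((p : R) ^ j • Φ u + Φ y)
              = (p : R) ^ j • (u - Φ u) + (y - Φ y) := by rw [smul_sub]; abel
            _ = (p : R) ^ j • (w - (p : R) • u') + (p : R) ^ (j + 1) • u' := by rw [huu, hy]
            _ = (p : R) ^ j • w := by rw [smul_sub, smul_smul, ← pow_succ]; abel
    obtain ⟨x, hx⟩ := key n 0 (by omega) v
    refine ⟨x, ?_⟩
    show x - Φ x = v
    rw [hx, pow_zero, one_smul]
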